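/- Define β_n = q·(1−q^n)·(1−pq^n)/((1+q−(1+p)·q^n)·(1+q−(1+p)·q^{n+1})) for n ≥ 1, m_n = q·(1−q^n)/(1+q−(1+p)·q^{n+1}) and h_n = q·(1−pq^n)/(1+q−(1+p)·q^{n+1}) for n ≥ 0. Then m_0 = 0, 0 ≤ m_n < 1 and 0 < h_n < 1 for all n ≥ 0, and for all n ≥ 1 one has β_n = m_n·(1 − m_{n−1}) and β_n = h_n·(1 − h_{n−1}); i.e., (m_n) is the minimal parameter sequence of the chain sequence (β_n) and (h_n) is a parameter sequence for it. -/

import Mathlib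

/-- The chain sequence `β_n`. -/
noncomputable def β (p q : ℝ) (n : ℕ) : ℝ :=
  q * (1 - q ^ n) * (1 - p * q ^ n) /
    ((1 + q - (1 + p) * q ^ n) * (1 + q - (1 + p) * q ^ (n + 1)))

/-- The minimal parameter sequence `m_n`. -/
noncomputable def mseq (p q : ℝ) (n : ℕ) : ℝ :=
  q * (1 - q ^ n) / (1 + q - (1 + p) * q ^ (n + 1))

/-- The parameter sequence `h_n` corresponding to the generalized
Stieltjes–Wigert polynomials. -/
noncomputable def hseq (p q : ℝ) (n : ℕ) : ℝ :=
  q * (1 - p * q ^ n) / (1 + q - (1 + p) * q ^ (n + 1))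

theorem stmt_15 (p q : ℝ) (hp0 : 0 ≤ p) (hp1 : p < 1) (hq0 : 0 < q) (hq1 : q < 1) :
    mseq p q 0 = 0 ∧
    (∀ n : ℕ, 0 ≤ mseq p q n ∧ mseq p q n < 1) ∧
    (∀ n : ℕ, 0 < hseq p q n ∧ hseq p q n < 1) ∧
    (∀ n : ℕ, 1 ≤ n →
      β p q n = mseq p q n * (1 - mseq p q (n - 1)) ∧
      β p q n = hseq p q n * (1 - hseq p q (n - 1))) := by
  have hqk : ∀ k : ℕ, 1 ≤ k → q ^ k < 1 := fun k hk => pow_lt_one₀ hq0.le hq1 (by omega)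
  have hD : ∀ k : ℕ, 1 ≤ k → 0 < 1 + q - (1 + p) * q ^ k := by
    intro k hk
    have h1 := hqk k hk
    have h2 : q ^ k ≤ q := by
      calc q ^ k ≤ q ^ 1 := pow_le_pow_of_le_one hq0.le hq1.le hk
        _ = q := pow_one q
    nlinarith [pow_pos hq0 k]
  refine ⟨by simp [mseq], fun n => ?_, fun n => ?_, fun n hn => ?_⟩
  · have hd := hD (n + 1) (by omega)
    have h1 := hqk (n + 1) (by omega)
    have hpn : q ^ n ≤ 1 := pow_le_one₀ hq0.le hq1.le
    constructor
    · apply div_nonneg _ hd.le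
      nlinarith
    · rw [mseq, div_lt_one hd]
      have : q ^ (n + 1) = q * q ^ n := by ring
      nlinarith [pow_pos hq0 (n + 1), mul_nonneg hp0 (pow_pos hq0 (n + 1)).le]
  · have hd := hD (n + 1) (by omega)
    have h1 := hqk (n + 1) (by omega)
    have hpn : p * q ^ n ≤ 1 := by nlinarith [pow_le_one₀ hq0.le hq1.le (n := n), pow_pos hq0 n]
    have hpn' : p * q ^ n < 1 := by nlinarith [pow_le_one₀ hq0.le hq1.le (n := n), pow_pos hq0 n]
    constructor
    · apply div_pos _ hd
      nlinarith
    · rw [hseq, div_lt_one hd]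
      nlinarith [pow_pos hq0 (n + 1), pow_succ q n]
  · obtain ⟨m, rfl⟩ : ∃ m, n = m + 1 := ⟨n - 1, by omega⟩
    simp only [β, mseq, hseq, Nat.add_sub_cancel]
    have d1 := (hD (m + 1) (by omega)).ne'
    have d2 := (hD (m + 2) (by omega)).ne'
    have e2 : (1 : ℝ) + q - (1 + p) * q ^ (m + 1 + 1) = 1 + q - (1 + p) * q ^ (m + 2) := by
      norm_num
    constructor <;> · rw [e2]; rw [div_mul_eq_mul_div, eq_div_iff d2, one_sub_div d1]; field_simp; ring
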